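/- Let 𝒳 be a fundamental minimal system for 𝕏 and K ≥ 1. Suppose that for each f in the linear span ⟨𝒳⟩ there is m(f) ∈ ℕ such that ‖f‖ ≤ K‖f + g‖ for every g in the linear span of 𝒳_{>m(f)}. Then for each f ∈ ⟨𝒳⟩ there exists f* in the linear span ⟨𝒳*⟩ of the dual system such that f*(f) = ‖f‖ and ‖f*‖ ≤ K. -/

import Mathlib

/-- If for each `f` in the span of `𝒳` there is `m(f)` such that
`‖f‖ ≤ K‖f + g‖` for every `g` in the span of `𝒳_{>m(f)}`, then for each such `f` there is
`f* ∈ ⟨𝒳*⟩` with `f*(f) = ‖f‖` and `‖f*‖ ≤ K`. -/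
theorem tail_estimate_implies_norming_functional
    {𝕜 : Type*} [RCLike 𝕜] {X : Type*} [NormedAddCommGroup X] [NormedSpace 𝕜 X]
    [CompleteSpace X] [TopologicalSpace.SeparableSpace X]
    (hinf : ¬ FiniteDimensional 𝕜 X)
    (x : ℕ → X) (xs : ℕ → X →L[𝕜] 𝕜)
    (hdense : Dense (Submodule.span 𝕜 (Set.range x) : Set X))
    (hbi : ∀ n k, xs n (x k) = if n = k then 1 else 0)
    (K : ℝ) (hK : 1 ≤ K)
    (h : ∀ f ∈ Submodule.span 𝕜 (Set.range x), ∃ m : ℕ,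
      ∀ g ∈ Submodule.span 𝕜 (x '' {n | m < n}), ‖f‖ ≤ K * ‖f + g‖) :
    ∀ f ∈ Submodule.span 𝕜 (Set.range x),
      ∃ fs ∈ Submodule.span 𝕜 (Set.range xs), fs f = (‖f‖ : 𝕜) ∧ ‖fs‖ ≤ K := by
  intro f hf
  by_cases hf0 : f = 0
  · exact ⟨0, Submodule.zero_mem _, by simp [hf0], by simpa using le_trans zero_le_one hK⟩
  have hK0 : (0 : ℝ) < K := lt_of_lt_of_le zero_lt_one hK
  obtain ⟨m, hm⟩ := h f hf
  set T : Submodule 𝕜 X := Submodule.span 𝕜 (x '' {n | m < n}) with hT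
  set S : Submodule 𝕜 X := T.topologicalClosure with hS
  haveI hSc : IsClosed (S : Set X) := T.isClosed_topologicalClosure
  -- distance from f to T is at least ‖f‖ / K
  have hdist : ‖f‖ / K ≤ Metric.infDist f (T : Set X) := by
    rw [Metric.infDist_eq_iInf]
    haveI : Nonempty (T : Set X) := ⟨⟨0, T.zero_mem⟩⟩
    refine le_ciInf fun ⟨g, hg⟩ => ?_
    have := hm (-g) (T.neg_mem hg)
    rw [div_le_iff₀ hK0]
    simpa [dist_eq_norm, sub_eq_add_neg, mul_comm] using this
  -- the quotient map as a continuous linear map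
  let π : X →L[𝕜] X ⧸ S :=
    LinearMap.mkContinuous S.mkQ 1 (fun z => by
      simpa using Submodule.Quotient.norm_mk_le S z)
  have hπ : ∀ z : X, π z = Submodule.Quotient.mk z := fun z => rfl
  have hnormπ : ∀ z : X, ‖π z‖ = Metric.infDist z (T : Set X) := by
    intro z
    have h1 : ‖π z‖ = Metric.infDist z (S : Set X) :=
      QuotientAddGroup.norm_mk (S := S.toAddSubgroup) z
    rw [h1, hS, Submodule.topologicalClosure_coe, Metric.infDist_closure]
  have hπf : ‖f‖ / K ≤ ‖π f‖ := by rw [hnormπ]; exact hdist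
  have hπf0 : π f ≠ 0 := by
    intro h0
    have : ‖f‖ / K ≤ 0 := by simpa [h0] using hπf
    have : ‖f‖ ≤ 0 := by
      rw [div_le_iff₀ hK0] at this; simpa using this
    exact hf0 (norm_le_zero_iff.mp this)
  have hfpos : 0 < ‖f‖ := norm_pos_iff.mpr hf0
  have hπfpos : 0 < ‖π f‖ := lt_of_lt_of_le (by positivity) hπf
  obtain ⟨g, hg1, hgf⟩ := exists_dual_vector 𝕜 (π f) (norm_ne_zero_iff.mpr hπf0)
  set c : ℝ := ‖f‖ / ‖π f‖ with hc
  have hc0 : 0 ≤ c := by positivity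
  have hcK : c ≤ K := by
    rw [hc, div_le_iff₀ hπfpos]
    calc ‖f‖ ≤ K * (‖f‖ / K) := by rw [mul_div_cancel₀]; exact ne_of_gt hK0
    _ ≤ K * ‖π f‖ := by nlinarith
  set ψ : X →L[𝕜] 𝕜 := (c : 𝕜) • (g.comp π) with hψ
  have hψf : ψ f = (‖f‖ : 𝕜) := by
    rw [hψ]
    simp only [ContinuousLinearMap.smul_apply, ContinuousLinearMap.comp_apply, hgf]
    rw [smul_eq_mul, ← RCLike.ofReal_mul, div_mul_cancel₀ _ (ne_of_gt hπfpos)]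
  have hψT : ∀ z ∈ T, ψ z = 0 := by
    intro z hz
    have : π z = 0 := by
      rw [hπ, Submodule.Quotient.mk_eq_zero]
      exact Submodule.le_topologicalClosure T hz
    simp [hψ, this]
  have hψnorm : ‖ψ‖ ≤ K := by
    refine ContinuousLinearMap.opNorm_le_bound _ (le_of_lt hK0) fun z => ?_
    have h1 : ‖ψ z‖ = c * ‖g (π z)‖ := by
      simp [hψ, norm_smul, abs_of_nonneg hc0]
    have h2 : ‖g (π z)‖ ≤ ‖π z‖ := by
      calc ‖g (π z)‖ ≤ ‖g‖ * ‖π z‖ := g.le_opNorm _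
      _ = ‖π z‖ := by rw [hg1, one_mul]
    have h3 : ‖π z‖ ≤ ‖z‖ := by
      rw [hπ]; exact Submodule.Quotient.norm_mk_le S z
    calc ‖ψ z‖ ≤ c * ‖z‖ := by rw [h1]; exact mul_le_mul_of_nonneg_left (h2.trans h3) hc0
    _ ≤ K * ‖z‖ := mul_le_mul_of_nonneg_right hcK (norm_nonneg z)
  -- define fs as a finite combination of coordinate functionals
  set fs : X →L[𝕜] 𝕜 := ∑ j ∈ Finset.range (m + 1), ψ (x j) • xs j with hfs
  have hfseq : fs = ψ := by
    refine ContinuousLinearMap.ext_on hdense ?_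
    rintro _ ⟨k, rfl⟩
    simp only [hfs, ContinuousLinearMap.sum_apply, ContinuousLinearMap.smul_apply, hbi,
      smul_eq_mul, mul_ite, mul_one, mul_zero]
    rw [Finset.sum_ite_eq' (Finset.range (m + 1)) k (fun j => ψ (x j))]
    by_cases hk : k ∈ Finset.range (m + 1)
    · simp [hk]
    · have hkm : m < k := by
        simp only [Finset.mem_range, not_lt] at hk; omega
      have : ψ (x k) = 0 := hψT _ (Submodule.subset_span ⟨k, hkm, rfl⟩)
      simp [hk, this]
  refine ⟨fs, ?_, ?_, ?_⟩
  · exact Submodule.sum_mem _ fun j _ =>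
      Submodule.smul_mem _ _ (Submodule.subset_span ⟨j, rfl⟩)
  · rw [hfseq]; exact hψf
  · rw [hfseq]; exact hψnorm
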